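/- Let u, u' be non-zero vectors in ℝ² and r ≥ 1 a real number such that the angle between u and u' is at most φ for some φ < π/3, and r⁻¹ ≤ |u|/|u'| ≤ r. Then |u - u'| ≤ max(2 sin(φ/2), √(1 + r⁻² - 2 r⁻¹ cos φ)) · max(|u|, |u'|). -/

import Mathlib

open InnerProductGeometry

lemma diff_aux (c cφ a b : ℝ) (ha : 0 < a) (hb : 0 < b) (hab : a ≤ b)
    (hc0 : 0 ≤ c) (hc1 : c ≤ 1) (hc : c * b ≤ a) (hcφ : cφ ≤ 1) :
    a ^ 2 + b ^ 2 - 2 * a * b * cφ ≤ max (2 - 2 * cφ) (1 + c ^ 2 - 2 * c * cφ) * b ^ 2 := by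
  rcases max_cases (2 - 2 * cφ) (1 + c ^ 2 - 2 * c * cφ) with ⟨he, hge⟩ | ⟨he, hlt⟩ <;> rw [he]
  · -- f(c) ≤ f(1); need (b−a)(a+b−2cφ b) ≥ 0
    have h1 : 0 ≤ 1 + c - 2 * cφ := by
      rcases lt_or_eq_of_le hc1 with hlt | heq
      · have hpos : 0 < 1 - c := by linarith
        have hprod : 0 ≤ (1 - c) * (1 + c - 2 * cφ) := by nlinarith [hge]
        nlinarith [hprod, hpos]
      · subst heq; linarith
    have h2 : 0 ≤ a + b - 2 * cφ * b := by
      nlinarith [mul_nonneg h1 hb.le, hc]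
    nlinarith [mul_nonneg (sub_nonneg.2 hab) h2]
  · -- f(1) < f(c); need (a−cb)(a+cb−2cφ b) ≤ 0
    have h1 : 1 + c - 2 * cφ < 0 := by
      nlinarith [mul_nonneg (sub_nonneg.2 hc1) (sub_nonneg.2 hc1), hc1]
    have h2 : a + c * b - 2 * cφ * b ≤ 0 := by
      nlinarith [mul_nonpos_of_nonpos_of_nonneg h1.le hb.le]
    nlinarith [mul_nonneg (sub_nonneg.2 hc) (neg_nonneg.2 h2)]

theorem diff_le_of_angle_and_ratio (u u' : EuclideanSpace ℝ (Fin 2))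
    (hu : u ≠ 0) (hu' : u' ≠ 0) (r φ : ℝ) (hr : 1 ≤ r)
    (hφ0 : 0 ≤ φ) (hφ : φ < Real.pi / 3)
    (hang : angle u u' ≤ φ)
    (hlow : r⁻¹ ≤ ‖u‖ / ‖u'‖) (hhigh : ‖u‖ / ‖u'‖ ≤ r) :
    ‖u - u'‖ ≤
      max (2 * Real.sin (φ / 2)) (Real.sqrt (1 + r⁻¹ ^ 2 - 2 * r⁻¹ * Real.cos φ)) *
        max ‖u‖ ‖u'‖ := by
  have hπ : 0 < Real.pi := Real.pi_pos
  have ha : (0:ℝ) < ‖u‖ := norm_pos_iff.2 hu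
  have hb : (0:ℝ) < ‖u'‖ := norm_pos_iff.2 hu'
  have hr0 : (0:ℝ) < r := lt_of_lt_of_le one_pos hr
  set c : ℝ := r⁻¹ with hcdef
  have hc0 : 0 < c := inv_pos.2 hr0
  have hc1 : c ≤ 1 := by
    rw [hcdef]; exact inv_le_one_of_one_le₀ hr
  have hφπ : φ ≤ Real.pi := le_trans hφ.le (by linarith)
  have hcosφ1 : Real.cos φ ≤ 1 := Real.cos_le_one φ
  have hcos : Real.cos φ ≤ Real.cos (angle u u') :=
    Real.cos_le_cos_of_nonneg_of_le_pi (angle_nonneg u u') hφπ hang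
  have hinner : (inner ℝ u u' : ℝ) = ‖u‖ * ‖u'‖ * Real.cos (angle u u') := by
    rw [cos_angle]; field_simp
  have hsq : ‖u - u'‖ ^ 2 = ‖u‖ ^ 2 + ‖u'‖ ^ 2 - 2 * (‖u‖ * ‖u'‖ * Real.cos (angle u u')) := by
    rw [norm_sub_sq_real, hinner]; ring
  have key1 : ‖u - u'‖ ^ 2 ≤ ‖u‖ ^ 2 + ‖u'‖ ^ 2 - 2 * ‖u‖ * ‖u'‖ * Real.cos φ := by
    rw [hsq]
    nlinarith [mul_pos ha hb]
  set A : ℝ := 2 * Real.sin (φ / 2) with hAdef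
  set B : ℝ := Real.sqrt (1 + c ^ 2 - 2 * c * Real.cos φ) with hBdef
  have hA0 : 0 ≤ A := by
    have : 0 ≤ Real.sin (φ / 2) :=
      Real.sin_nonneg_of_nonneg_of_le_pi (by linarith) (by linarith)
    linarith
  have hB0 : 0 ≤ B := Real.sqrt_nonneg _
  have hA2 : A ^ 2 = 2 - 2 * Real.cos φ := by
    have h1 : Real.cos (2 * (φ / 2)) = 2 * Real.cos (φ / 2) ^ 2 - 1 := Real.cos_two_mul _
    have h2 : Real.sin (φ / 2) ^ 2 + Real.cos (φ / 2) ^ 2 = 1 := Real.sin_sq_add_cos_sq _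
    have h3 : 2 * (φ / 2) = φ := by ring
    rw [h3] at h1
    rw [hAdef]; nlinarith
  have hB2 : B ^ 2 = 1 + c ^ 2 - 2 * c * Real.cos φ := by
    rw [hBdef]
    exact Real.sq_sqrt (by nlinarith)
  -- squared key inequality
  have key2 : ‖u‖ ^ 2 + ‖u'‖ ^ 2 - 2 * ‖u‖ * ‖u'‖ * Real.cos φ ≤
      max (A ^ 2) (B ^ 2) * (max ‖u‖ ‖u'‖) ^ 2 := by
    rw [hA2, hB2]
    rcases le_total ‖u‖ ‖u'‖ with h | h
    · rw [max_eq_right h]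
      have hcb : c * ‖u'‖ ≤ ‖u‖ := by
        rw [le_div_iff₀ hb] at hlow; exact hlow
      have := diff_aux c (Real.cos φ) ‖u‖ ‖u'‖ ha hb h hc0.le hc1 hcb hcosφ1
      linarith [this]
    · rw [max_eq_left h]
      have hcb : c * ‖u‖ ≤ ‖u'‖ := by
        have h1 : ‖u‖ ≤ r * ‖u'‖ := by
          rw [div_le_iff₀ hb] at hhigh; linarith
        have : c * ‖u‖ ≤ c * (r * ‖u'‖) := by
          exact mul_le_mul_of_nonneg_left h1 hc0.le
        rw [hcdef] at this ⊢
        calc r⁻¹ * ‖u‖ ≤ r⁻¹ * (r * ‖u'‖) := this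
          _ = ‖u'‖ := by field_simp
      have := diff_aux c (Real.cos φ) ‖u'‖ ‖u‖ hb ha h hc0.le hc1 hcb hcosφ1
      linarith [this]
  have hmax2 : max (A ^ 2) (B ^ 2) = (max A B) ^ 2 := by
    rcases le_total A B with h | h
    · rw [max_eq_right h, max_eq_right (pow_le_pow_left₀ hA0 h 2)]
    · rw [max_eq_left h, max_eq_left (pow_le_pow_left₀ hB0 h 2)]
  have hK0 : 0 ≤ max A B := le_trans hA0 (le_max_left _ _)
  have hM0 : 0 ≤ max ‖u‖ ‖u'‖ := le_trans ha.le (le_max_left _ _)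
  have final : ‖u - u'‖ ^ 2 ≤ (max A B * max ‖u‖ ‖u'‖) ^ 2 := by
    rw [mul_pow, ← hmax2]
    exact le_trans key1 key2
  calc ‖u - u'‖ = Real.sqrt (‖u - u'‖ ^ 2) := (Real.sqrt_sq (norm_nonneg _)).symm
    _ ≤ Real.sqrt ((max A B * max ‖u‖ ‖u'‖) ^ 2) := Real.sqrt_le_sqrt final
    _ = max A B * max ‖u‖ ‖u'‖ := Real.sqrt_sq (mul_nonneg hK0 hM0)
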